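/- In the plane, at most six pairwise nonoverlapping unit disks can all be tangent to a fixed central unit disk; that is, the kissing number in dimension 2 is 6. -/

import Mathlib

open Complex

private theorem cos_key (z w : ℂ) (hz : ‖z‖ = 2) (hw : ‖w‖ = 2)
    (h : 2 ≤ ‖z - w‖) : Real.cos (z.arg - w.arg) ≤ 1/2 := by
  have h2 : (4:ℝ) ≤ normSq (z - w) := by
    have := Complex.sq_norm (z - w)
    nlinarith [norm_nonneg (z - w)]
  rw [Complex.normSq_sub] at h2
  have hre : (z * starRingEnd ℂ w).re = 4 * Real.cos (z.arg - w.arg) := by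
    have hmul : z * starRingEnd ℂ w = 4 * Complex.exp (((z.arg - w.arg : ℝ) : ℂ) * I) := by
      conv_lhs => rw [← Complex.norm_mul_exp_arg_mul_I z, ← Complex.norm_mul_exp_arg_mul_I w]
      rw [hz, hw, map_mul, ← Complex.exp_conj]
      simp only [map_mul, Complex.conj_ofReal, Complex.conj_I]
      rw [show ((z.arg - w.arg : ℝ) : ℂ) * I = ↑z.arg * I + ↑w.arg * -I by push_cast; ring,
        Complex.exp_add]
      push_cast
      ring
    have hexp : (Complex.exp (((z.arg - w.arg : ℝ) : ℂ) * I)).re = Real.cos (z.arg - w.arg) :=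
      Complex.exp_ofReal_mul_I_re _
    rw [hmul, Complex.mul_re, hexp]
    simp
  rw [← Complex.sq_norm z, ← Complex.sq_norm w, hz, hw, hre] at h2
  linarith

private theorem floor_eq_abs_sub_lt (a b : ℝ) (h : ⌊a⌋ = ⌊b⌋) : |a - b| < 1 := by
  rw [abs_sub_lt_iff]
  constructor
  · have h1 := Int.lt_floor_add_one a
    have h2 := Int.floor_le b
    rw [h] at h1
    linarith
  · have h1 := Int.lt_floor_add_one b
    have h2 := Int.floor_le a
    rw [h] at h2
    linarith

theorem kissing_number_two_dim (n : ℕ) (p : Fin n → EuclideanSpace ℝ (Fin 2))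
    (htouch : ∀ i, ‖p i‖ = 2)
    (hsep : ∀ i j, i ≠ j → 2 ≤ dist (p i) (p j)) :
    n ≤ 6 := by
  by_contra hn
  push_neg at hn
  set z : Fin n → ℂ := fun i => (p i 0 : ℂ) + (p i 1 : ℝ) * I with hzdef
  have habs : ∀ i, ‖z i‖ = 2 := by
    intro i
    have : ‖p i‖ = ‖z i‖ := by
      rw [EuclideanSpace.norm_eq, Complex.norm_def, Fin.sum_univ_two]
      congr 1
      rw [Complex.normSq_add_mul_I]
      simp [sq_abs]
    rw [← this, htouch]
  have hdist : ∀ i j, dist (p i) (p j) = ‖z i - z j‖ := by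
    intro i j
    rw [EuclideanSpace.dist_eq, Complex.norm_def, Fin.sum_univ_two]
    congr 1
    have hz : z i - z j = ((p i 0 - p j 0 : ℝ) : ℂ) + ((p i 1 - p j 1 : ℝ) : ℂ) * I := by
      simp only [hzdef]; push_cast; ring
    rw [hz, Complex.normSq_add_mul_I]
    simp [Real.dist_eq, sq_abs]
  set θ : Fin n → ℝ := fun i => (z i).arg with hθ
  have hpi := Real.pi_pos
  have hub : ∀ i, (Real.pi - θ i) * 3 / Real.pi < 6 := by
    intro i
    have h1 : -Real.pi < θ i := Complex.neg_pi_lt_arg (z i)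
    rw [div_lt_iff₀ hpi]
    nlinarith
  have hlb : ∀ i, 0 ≤ (Real.pi - θ i) * 3 / Real.pi := by
    intro i
    have h1 : θ i ≤ Real.pi := Complex.arg_le_pi (z i)
    apply div_nonneg _ hpi.le
    nlinarith
  set f : Fin n → Fin 6 := fun i =>
    ⟨(⌊(Real.pi - θ i) * 3 / Real.pi⌋).toNat, by
      have h0 := hlb i
      have h6 : ⌊(Real.pi - θ i) * 3 / Real.pi⌋ < 6 := by
        rw [Int.floor_lt]; exact_mod_cast hub i
      omega⟩ with hf
  have hcard : Fintype.card (Fin 6) < Fintype.card (Fin n) := by simp; omega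
  obtain ⟨i, j, hij, hfij⟩ := Fintype.exists_ne_map_eq_of_card_lt f hcard
  have hfloor : ⌊(Real.pi - θ i) * 3 / Real.pi⌋ = ⌊(Real.pi - θ j) * 3 / Real.pi⌋ := by
    have hv := congrArg Fin.val hfij
    simp only [hf] at hv
    have h0i := Int.floor_nonneg.mpr (hlb i)
    have h0j := Int.floor_nonneg.mpr (hlb j)
    omega
  have hlt : |θ i - θ j| < Real.pi / 3 := by
    have h1 := floor_eq_abs_sub_lt _ _ hfloor
    have heq : (Real.pi - θ i) * 3 / Real.pi - (Real.pi - θ j) * 3 / Real.pi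
        = (θ j - θ i) * 3 / Real.pi := by field_simp; ring
    rw [heq, abs_div, abs_of_pos hpi, div_lt_one hpi, abs_mul] at h1
    rw [abs_sub_comm]
    have h3 : |(3:ℝ)| = 3 := by norm_num
    rw [h3] at h1
    linarith
  have hcos : 1/2 < Real.cos (θ i - θ j) := by
    have h3 : Real.cos (Real.pi / 3) < Real.cos |θ i - θ j| := by
      apply Real.cos_lt_cos_of_nonneg_of_le_pi (abs_nonneg _) (by linarith) hlt
    rwa [Real.cos_pi_div_three, Real.cos_abs] at h3
  have hkey := cos_key (z i) (z j) (habs i) (habs j) (by rw [← hdist]; exact hsep i j hij)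
  have : Real.cos (θ i - θ j) ≤ 1/2 := hkey
  linarith
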